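/- Let X₁ and X₂ be independent and identically distributed absolutely continuous real-valued random variables, symmetrically distributed about θ. Then for every ω with 0 ≤ ω < 1, the convex combination ωX₁ + (1 − ω)X₂ is Pitman closer to θ than X₁, i.e., P(|ωX₁ + (1 − ω)X₂ − θ| < |X₁ − θ|) ≥ 1/2. -/

import Mathlib

open MeasureTheory ProbabilityTheory
open scoped ENNReal

/-- Corollary 2.  Let `X₁` and `X₂` be i.i.d. absolutely continuous
real random variables, each symmetric about `θ`.  Then for every `0 ≤ ω < 1` the convex
combination `ωX₁ + (1 - ω)X₂` is Pitman closer to `θ` than `X₁`. -/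
theorem convex_combination_pitman_closer_iid
    {Ω : Type*} [MeasurableSpace Ω] (μ : Measure Ω) [IsProbabilityMeasure μ]
    (X₁ X₂ : Ω → ℝ) (hX₁meas : Measurable X₁) (hX₂meas : Measurable X₂)
    (hindep : IndepFun X₁ X₂ μ)
    -- identically distributed
    (hident : Measure.map X₁ μ = Measure.map X₂ μ) (θ : ℝ)
    -- symmetry about `θ`
    (hsym : Measure.map (fun ω => X₁ ω - θ) μ = Measure.map (fun ω => θ - X₁ ω) μ)
    -- absolute continuity
    (hac : HasPDF X₁ μ) :
    ∀ w : ℝ, 0 ≤ w → w < 1 →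
      (μ {ω | |w * X₁ ω + (1 - w) * X₂ ω - θ| < |X₁ ω - θ|}).toReal ≥ 1 / 2 := by
  intro w hw0 hw1
  set ν : Measure ℝ := Measure.map X₁ μ with hν
  have hν2 : Measure.map X₂ μ = ν := hident.symm
  -- ν has no atoms
  have hνs : ∀ a : ℝ, ν {a} = 0 := fun a =>
    hac.absolutelyContinuous (by simp : (volume : Measure ℝ) {a} = 0)
  -- joint law is product
  have hpair : Measure.map (fun ω => (X₁ ω, X₂ ω)) μ = ν.prod ν := by
    rw [(indepFun_iff_map_prod_eq_prod_map_map hX₁meas.aemeasurable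
      hX₂meas.aemeasurable).mp hindep, hν2]
  have hpairmeas : Measurable (fun ω => (X₁ ω, X₂ ω)) := hX₁meas.prodMk hX₂meas
  -- the two symmetric sets
  set S : Set (ℝ × ℝ) := {p | |p.2 - θ| < |p.1 - θ|} with hS
  set S' : Set (ℝ × ℝ) := {p | |p.1 - θ| < |p.2 - θ|} with hS'
  have hm1 : Measurable fun p : ℝ × ℝ => |p.1 - θ| :=
    (measurable_fst.sub measurable_const).abs
  have hm2 : Measurable fun p : ℝ × ℝ => |p.2 - θ| :=
    (measurable_snd.sub measurable_const).abs
  have hSm : MeasurableSet S := measurableSet_lt hm2 hm1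
  have hS'm : MeasurableSet S' := measurableSet_lt hm1 hm2
  set E : Set Ω := {ω | |X₂ ω - θ| < |X₁ ω - θ|} with hE
  have hEm : MeasurableSet E :=
    measurableSet_lt ((hX₂meas.sub measurable_const).abs)
      ((hX₁meas.sub measurable_const).abs)
  -- μ E = μ E'
  have hEν : μ E = (ν.prod ν) S := by
    rw [← hpair, Measure.map_apply hpairmeas hSm]; rfl
  have hswap : (ν.prod ν) S = (ν.prod ν) S' := by
    have : S = Prod.swap ⁻¹' S' := by ext p; simp [hS, hS', Prod.swap]
    rw [this, ← Measure.map_apply measurable_swap hS'm, Measure.prod_swap]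
  have hE'ν : μ {ω | |X₁ ω - θ| < |X₂ ω - θ|} = (ν.prod ν) S' := by
    rw [← hpair, Measure.map_apply hpairmeas hS'm]; rfl
  -- the diagonal has measure zero
  have hD : μ {ω | |X₁ ω - θ| = |X₂ ω - θ|} = 0 := by
    have hDm : MeasurableSet {p : ℝ × ℝ | |p.1 - θ| = |p.2 - θ|} :=
      measurableSet_eq_fun hm1 hm2
    have : μ {ω | |X₁ ω - θ| = |X₂ ω - θ|}
        = (ν.prod ν) {p | |p.1 - θ| = |p.2 - θ|} := by
      rw [← hpair, Measure.map_apply hpairmeas hDm]; rfl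
    rw [this, Measure.prod_apply hDm]
    have hfib : ∀ x : ℝ, ν (Prod.mk x ⁻¹' {p : ℝ × ℝ | |p.1 - θ| = |p.2 - θ|}) = 0 := by
      intro x
      have hsub : (Prod.mk x ⁻¹' {p : ℝ × ℝ | |p.1 - θ| = |p.2 - θ|})
          ⊆ {x} ∪ {2 * θ - x} := by
        intro y hy
        simp only [Set.mem_preimage, Set.mem_setOf_eq] at hy
        rcases abs_eq_abs.mp hy.symm with h | h
        · left; simp; linarith
        · right; simp; linarith
      refine le_antisymm (le_trans (measure_mono hsub) ?_) (by positivity)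
      calc ν ({x} ∪ {2 * θ - x}) ≤ ν {x} + ν {2 * θ - x} := measure_union_le _ _
        _ = 0 := by rw [hνs, hνs, add_zero]
    simp only [hfib, lintegral_zero]
  -- μ E ≥ 1/2
  have hhalf : (1 / 2 : ℝ≥0∞) ≤ μ E := by
    have hcompl : Eᶜ ⊆ {ω | |X₁ ω - θ| < |X₂ ω - θ|} ∪ {ω | |X₁ ω - θ| = |X₂ ω - θ|} := by
      intro ω hω
      simp only [hE, Set.mem_compl_iff, Set.mem_setOf_eq, not_lt] at hω
      rcases lt_or_eq_of_le hω with h | h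
      · exact Or.inl h
      · exact Or.inr h
    have h1 : (1 : ℝ≥0∞) = μ E + μ Eᶜ := by
      rw [measure_add_measure_compl hEm]; simp
    have h2 : μ Eᶜ ≤ μ E := by
      calc μ Eᶜ ≤ μ ({ω | |X₁ ω - θ| < |X₂ ω - θ|} ∪ {ω | |X₁ ω - θ| = |X₂ ω - θ|}) :=
            measure_mono hcompl
        _ ≤ μ {ω | |X₁ ω - θ| < |X₂ ω - θ|} + μ {ω | |X₁ ω - θ| = |X₂ ω - θ|} :=
            measure_union_le _ _
        _ = μ E := by rw [hD, add_zero, hE'ν, hEν, hswap]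
    have h3 : (1 : ℝ≥0∞) ≤ 2 * μ E := by
      rw [two_mul]; calc (1 : ℝ≥0∞) = μ E + μ Eᶜ := h1
        _ ≤ μ E + μ E := add_le_add_right h2 _
    calc (1 / 2 : ℝ≥0∞) = 1 * (1 / 2) := (one_mul _).symm
      _ ≤ (2 * μ E) * (1 / 2) := by
          exact mul_le_mul_left h3 _
      _ = μ E := by
          rw [mul_comm (2 : ℝ≥0∞) (μ E), mul_assoc, one_div,
            ENNReal.mul_inv_cancel (by norm_num) (by norm_num), mul_one]
  -- inclusion E ⊆ target
  have hsub : E ⊆ {ω | |w * X₁ ω + (1 - w) * X₂ ω - θ| < |X₁ ω - θ|} := by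
    intro ω hω
    simp only [hE, Set.mem_setOf_eq] at hω ⊢
    have hkey : w * X₁ ω + (1 - w) * X₂ ω - θ = w * (X₁ ω - θ) + (1 - w) * (X₂ ω - θ) := by
      ring
    rw [hkey]
    calc |w * (X₁ ω - θ) + (1 - w) * (X₂ ω - θ)|
        ≤ |w * (X₁ ω - θ)| + |(1 - w) * (X₂ ω - θ)| := abs_add_le _ _
      _ = w * |X₁ ω - θ| + (1 - w) * |X₂ ω - θ| := by
          rw [abs_mul, abs_mul, abs_of_nonneg hw0, abs_of_nonneg (show (0:ℝ) ≤ 1 - w by linarith)]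
      _ < |X₁ ω - θ| := by nlinarith [abs_nonneg (X₂ ω - θ)]
  have hfinal : (1 / 2 : ℝ≥0∞) ≤ μ {ω | |w * X₁ ω + (1 - w) * X₂ ω - θ| < |X₁ ω - θ|} :=
    le_trans hhalf (measure_mono hsub)
  have := ENNReal.toReal_mono (measure_ne_top μ _) hfinal
  simpa using this
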